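/- Let V : ℝ × [0,T] → ℝ be C^{2,1} with ∂ₓV > 0 everywhere, satisfying ∂ₜV = α·∂ₓV - c where α = α(x, T-t, φ), φ = -∂ₓ²V/∂ₓV, and α, c are C¹. Define ψ(x,τ) = 1/∂ₓV(x,t) with τ = T-t. Then ψ satisfies -∂_τψ + (total x-derivative of α)·ψ - α·φ·ψ - ψ²·∂ₓc = 0, i.e., ∂_τψ = ∂ₓα·ψ - α·φ·ψ - ψ²·∂ₓc. -/

import Mathlib

theorem evolution_equation_for_psi
    (T : ℝ) (hT : 0 < T)
    (V : ℝ → ℝ → ℝ) (α : ℝ → ℝ → ℝ → ℝ) (c : ℝ → ℝ → ℝ)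
    (hV : ContDiff ℝ 2 (fun p : ℝ × ℝ => V p.1 p.2))
    (hα : ContDiff ℝ 1 (fun p : ℝ × ℝ × ℝ => α p.1 p.2.1 p.2.2))
    (hc : ContDiff ℝ 1 (fun p : ℝ × ℝ => c p.1 p.2))
    (hVx : ∀ x t, 0 < deriv (fun y => V y t) x)
    (φ ψ : ℝ → ℝ → ℝ)
    (hφ : ∀ x τ, φ x τ =
      -(deriv (deriv (fun y => V y (T - τ))) x) / deriv (fun y => V y (T - τ)) x)
    (hψ : ∀ x τ, ψ x τ = 1 / deriv (fun y => V y (T - τ)) x)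
    (hpde : ∀ x t, deriv (fun s => V x s) t =
      α x (T - t) (φ x (T - t)) * deriv (fun y => V y t) x - c x t) :
    ∀ x : ℝ, ∀ τ ∈ Set.Icc (0:ℝ) T,
      deriv (fun s => ψ x s) τ =
        deriv (fun y => α y τ (φ y τ)) x * ψ x τ
          - α x τ (φ x τ) * φ x τ * ψ x τ
          - (ψ x τ) ^ 2 * deriv (fun y => c y (T - τ)) x := by
  intro x τ hτ
  set f : ℝ × ℝ → ℝ := fun p => V p.1 p.2 with hfdef
  have hfd : Differentiable ℝ f := hV.differentiable (by norm_num)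
  have hf1 : ContDiff ℝ 1 (fderiv ℝ f) := hV.fderiv_right (le_refl _)
  -- partial derivative functions
  set g : ℝ × ℝ → ℝ := fun p => fderiv ℝ f p (1, 0) with hgdef
  set h : ℝ × ℝ → ℝ := fun p => fderiv ℝ f p (0, 1) with hhdef
  have hg1 : ContDiff ℝ 1 g := hf1.clm_apply contDiff_const
  have hh1 : ContDiff ℝ 1 h := hf1.clm_apply contDiff_const
  -- derivative curves
  have lineX : ∀ (x t : ℝ), HasDerivAt (fun y : ℝ => (y, t)) ((1 : ℝ), (0 : ℝ)) x :=
    fun x t => (hasDerivAt_id x).prodMk (hasDerivAt_const x t)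
  have lineT : ∀ (x t : ℝ), HasDerivAt (fun s : ℝ => (x, s)) ((0 : ℝ), (1 : ℝ)) t :=
    fun x t => (hasDerivAt_const t x).prodMk (hasDerivAt_id t)
  have hVxHD : ∀ (y s : ℝ), HasDerivAt (fun y => V y s) (g (y, s)) y := by
    intro y s
    exact ((hfd (y, s)).hasFDerivAt.comp_hasDerivAt y (lineX y s))
  have hVtHD : ∀ (y s : ℝ), HasDerivAt (fun s => V y s) (h (y, s)) s := by
    intro y s
    exact ((hfd (y, s)).hasFDerivAt.comp_hasDerivAt s (lineT y s))
  have hVx_eq : ∀ (y s : ℝ), deriv (fun y => V y s) y = g (y, s) :=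
    fun y s => (hVxHD y s).deriv
  have hVt_eq : ∀ (y s : ℝ), deriv (fun s => V y s) s = h (y, s) :=
    fun y s => (hVtHD y s).deriv
  set t : ℝ := T - τ with htdef
  have hτt : T - t = τ := by ring
  have hgpos : ∀ y : ℝ, 0 < g (y, t) := by
    intro y; rw [← hVx_eq]; exact hVx y t
  have hgne : ∀ y : ℝ, g (y, t) ≠ 0 := fun y => (hgpos y).ne'
  -- the function A
  set A : ℝ → ℝ := fun y => (h (y, t) + c y t) / g (y, t) with hAdef
  have hA_eq : ∀ y : ℝ, α y τ (φ y τ) = A y := by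
    intro y
    have := hpde y t
    rw [hVt_eq, hVx_eq, hτt] at this
    simp only [hAdef]
    field_simp [hgne y]
    linarith [this]
  -- differentiability of pieces of A
  have hhx : ∀ y : ℝ, HasDerivAt (fun y => h (y, t)) (fderiv ℝ h (y, t) (1, 0)) y := by
    intro y
    exact ((hh1.differentiable one_ne_zero (y, t)).hasFDerivAt.comp_hasDerivAt y (lineX y t))
  have hcx : ∀ y : ℝ, HasDerivAt (fun y => c y t)
      (fderiv ℝ (fun p : ℝ × ℝ => c p.1 p.2) (y, t) (1, 0)) y := by
    intro y
    exact ((hc.differentiable one_ne_zero (y, t)).hasFDerivAt.comp_hasDerivAt y (lineX y t))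
  have hgx : ∀ y : ℝ, HasDerivAt (fun y => g (y, t)) (fderiv ℝ g (y, t) (1, 0)) y := by
    intro y
    exact ((hg1.differentiable one_ne_zero (y, t)).hasFDerivAt.comp_hasDerivAt y (lineX y t))
  set Vxx : ℝ := fderiv ℝ g (x, t) (1, 0) with hVxxdef
  set cx : ℝ := fderiv ℝ (fun p : ℝ × ℝ => c p.1 p.2) (x, t) (1, 0) with hcxdef
  have hAd : DifferentiableAt ℝ A x :=
    (((hhx x).differentiableAt.add (hcx x).differentiableAt).div
      (hgx x).differentiableAt (hgne x))
  set a : ℝ := deriv A x with hadef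
  have hAx : HasDerivAt A a x := hAd.hasDerivAt
  -- φ relation
  have hφx : φ x τ = -Vxx / g (x, t) := by
    rw [hφ x τ]
    have : deriv (fun y => V y (T - τ)) = fun y => g (y, T - τ) := funext fun y => hVx_eq y (T - τ)
    rw [this]
    rw [(hgx x).deriv]
  have hVxx_eq : Vxx = -(φ x τ) * g (x, t) := by
    rw [hφx]; field_simp [hgne x]
  -- derivative of Vt in x
  have hVt_fun : (fun y => h (y, t)) = fun y => A y * g (y, t) - c y t := by
    funext y
    have := hpde y t
    rw [hVt_eq, hVx_eq, hτt, hA_eq y] at this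
    exact this
  have hhx_deriv : fderiv ℝ h (x, t) (1, 0) = a * g (x, t) + A x * Vxx - cx := by
    have h1 : HasDerivAt (fun y => A y * g (y, t) - c y t)
        (a * g (x, t) + A x * Vxx - cx) x := ((hAx.mul (hgx x)).sub (hcx x))
    have h2 := (hhx x).deriv
    rw [hVt_fun] at h2
    rw [← h2, h1.deriv]
  -- mixed partial symmetry
  have hsym : fderiv ℝ (fderiv ℝ f) (x, t) (0, 1) (1, 0)
      = fderiv ℝ (fderiv ℝ f) (x, t) (1, 0) (0, 1) :=
    second_derivative_symmetric (fun y => (hfd y).hasFDerivAt)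
      ((hf1.differentiable one_ne_zero (x, t)).hasFDerivAt) _ _
  have hfg : ∀ (v : ℝ × ℝ) (w : ℝ × ℝ),
      fderiv ℝ (fun p => fderiv ℝ f p w) (x, t) v = fderiv ℝ (fderiv ℝ f) (x, t) v w := by
    intro v w
    rw [fderiv_clm_apply (hf1.differentiable one_ne_zero (x, t)) (differentiableAt_const w)]
    simp
  have hgt_eq_hx : fderiv ℝ g (x, t) (0, 1) = fderiv ℝ h (x, t) (1, 0) := by
    rw [hgdef, hhdef]
    rw [hfg (0,1) (1,0), hfg (1,0) (0,1), hsym]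
  -- derivative of ψ in τ
  have hψfun : (fun s => ψ x s) = fun s => (g (x, T - s))⁻¹ := by
    funext s
    rw [hψ x s, hVx_eq, one_div]
  have hgτ : HasDerivAt (fun s => g (x, T - s)) (-(fderiv ℝ g (x, t) (0, 1))) τ := by
    have hline : HasDerivAt (fun s : ℝ => (x, T - s)) ((0 : ℝ), (-1 : ℝ)) τ :=
      (hasDerivAt_const τ x).prodMk (((hasDerivAt_id τ).const_sub T))
    have h0 : HasDerivAt (fun s => g (x, T - s)) (fderiv ℝ g (x, t) ((0 : ℝ), (-1 : ℝ))) τ :=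
      by have h0' := ((hg1.differentiable one_ne_zero (x, t)).hasFDerivAt.comp_hasDerivAt τ hline); exact h0'
    convert h0 using 1
    rw [← map_neg]
    congr 1
    simp [Prod.ext_iff]
  have hψderiv : deriv (fun s => ψ x s) τ
      = fderiv ℝ g (x, t) (0, 1) / (g (x, t)) ^ 2 := by
    rw [hψfun]
    rw [(hgτ.fun_inv (hgne x)).deriv]
    show -(-(fderiv ℝ g (x, t)) (0, 1)) / g (x, t) ^ 2 = _
    ring
  -- derivative of the α-composite and c in the goal
  have hαderiv : deriv (fun y => α y τ (φ y τ)) x = a := by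
    have : (fun y => α y τ (φ y τ)) = A := funext fun y => hA_eq y
    rw [this]
  have hcderiv : deriv (fun y => c y (T - τ)) x = cx := (hcx x).deriv
  -- assemble
  rw [hψderiv, hαderiv, hcderiv, hψ x τ, hVx_eq, ← htdef, hgt_eq_hx, hhx_deriv,
    hVxx_eq, hA_eq x]
  field_simp [hgne x]
  ring
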